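/- For every real number x ≥ 4, the natural logarithm satisfies ln x = Σ_{n≥1} (1/n) Σ_{j=0}^{n} C(n,j) · C(2j,j) · (-1/x)^j, where the double series converges. -/

import Mathlib

open Real Finset intervalIntegral MeasureTheory

lemma central_prod (n : ℕ) :
    (∏ i ∈ Finset.range n, (2 * (i : ℝ) + 1) / (2 * i + 2)) = ((2 * n).choose n : ℝ) / 4 ^ n := by
  induction n with
  | zero => simp
  | succ k ih =>
      rw [Finset.prod_range_succ, ih]
      have h := Nat.succ_mul_centralBinom_succ k
      have h' : ((k : ℝ) + 1) * ((2 * (k + 1)).choose (k + 1) : ℝ)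
          = 2 * (2 * k + 1) * ((2 * k).choose k : ℝ) := by
        have := congrArg (fun m : ℕ => (m : ℝ)) h
        simp only [Nat.centralBinom] at this
        push_cast at this
        push_cast
        linarith
      have hk : ((k : ℝ) + 1) ≠ 0 := by positivity
      have hC : ((2 * (k + 1)).choose (k + 1) : ℝ)
          = 2 * (2 * k + 1) * ((2 * k).choose k : ℝ) / (k + 1) := by
        field_simp
        linarith
      rw [hC]
      field_simp
      ring

lemma sin_pow_integral (j : ℕ) :
    (∫ θ in (0)..π, Real.sin θ ^ (2 * j)) = π * (((2 * j).choose j : ℝ) / 4 ^ j) := by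
  rw [integral_sin_pow_even, central_prod]

lemma inner_sum_integral (u : ℝ) (m : ℕ) :
    (∫ θ in (0)..π, (1 - u * Real.sin θ ^ 2) ^ m)
      = π * ∑ j ∈ Finset.range (m + 1),
          (m.choose j : ℝ) * ((2 * j).choose j : ℝ) * (-u / 4) ^ j := by
  have hexp : ∀ θ : ℝ, (1 - u * Real.sin θ ^ 2) ^ m
      = ∑ j ∈ Finset.range (m + 1),
          ((m.choose j : ℝ) * (-u) ^ j) * Real.sin θ ^ (2 * j) := by
    intro θ
    rw [sub_eq_add_neg, add_comm, add_pow]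
    refine Finset.sum_congr rfl fun j hj => ?_
    rw [neg_pow (u * Real.sin θ ^ 2), mul_pow, pow_mul]
    ring
  simp only [hexp]
  rw [intervalIntegral.integral_finset_sum]
  · rw [Finset.mul_sum]
    refine Finset.sum_congr rfl fun j hj => ?_
    rw [intervalIntegral.integral_const_mul, sin_pow_integral, div_pow]
    ring
  · intro j hj
    exact (Continuous.intervalIntegrable (by fun_prop) _ _)

lemma neg_log_le_rpow {θ : ℝ} (hθ : 0 < θ) : -Real.log θ ≤ 2 * θ ^ (-(1/2) : ℝ) := by
  rcases le_or_gt 1 θ with h | h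
  · have h1 : 0 ≤ Real.log θ := Real.log_nonneg h
    have h2 : (0:ℝ) < θ ^ (-(1/2) : ℝ) := Real.rpow_pos_of_pos hθ _
    linarith
  · have hy : (1:ℝ) ≤ 1/θ := one_le_one_div hθ h.le
    have h2 : Real.log (1/θ) ≤ 2 * Real.sqrt (1/θ) := by
      have hs : (0:ℝ) < Real.sqrt (1/θ) := Real.sqrt_pos.2 (by positivity)
      have : Real.log (Real.sqrt (1/θ)) ≤ Real.sqrt (1/θ) - 1 :=
        Real.log_le_sub_one_of_pos hs
      have hls : Real.log (Real.sqrt (1/θ)) = Real.log (1/θ) / 2 :=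
        Real.log_sqrt (by positivity)
      linarith
    have h3 : Real.sqrt (1/θ) = θ ^ (-(1/2) : ℝ) := by
      rw [Real.sqrt_eq_rpow, one_div, Real.inv_rpow hθ.le, ← Real.rpow_neg hθ.le]
    rw [Real.log_div one_ne_zero hθ.ne', Real.log_one] at h2
    rw [← h3]
    linarith

lemma intervalIntegrable_log_sin_half :
    IntervalIntegrable (fun θ => Real.log (Real.sin θ)) volume 0 (π/2) := by
  have hπ : (0:ℝ) < π/2 := by positivity
  have hg : IntervalIntegrable
      (fun θ : ℝ => Real.log (π/2) + 2 * θ ^ (-(1/2) : ℝ)) volume 0 (π/2) :=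
    intervalIntegrable_const.add ((intervalIntegrable_rpow' (by norm_num)).const_mul 2)
  refine hg.mono_fun' ?_ ?_
  · exact ((Real.measurable_log.comp Real.measurable_sin).aestronglyMeasurable)
  · rw [Filter.EventuallyLE, ae_restrict_iff' measurableSet_uIoc]
    refine Filter.Eventually.of_forall fun θ hθ => ?_
    rw [Set.uIoc_of_le hπ.le] at hθ
    obtain ⟨h0, h1⟩ := hθ
    have hs0 : 0 < Real.sin θ := Real.sin_pos_of_pos_of_lt_pi h0 (lt_of_le_of_lt h1 (by linarith [pi_pos]))
    have hs1 : Real.sin θ ≤ 1 := Real.sin_le_one θ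
    have hlow : 2/π * θ ≤ Real.sin θ := Real.mul_le_sin h0.le h1
    have hlog : -Real.log (Real.sin θ) ≤ Real.log (π/2) - Real.log θ := by
      have : Real.log (2/π * θ) ≤ Real.log (Real.sin θ) :=
        Real.log_le_log (by positivity) hlow
      rw [Real.log_mul (by positivity) h0.ne', Real.log_div two_ne_zero (by positivity)] at this
      have hl2 : Real.log (π/2) = Real.log π - Real.log 2 := Real.log_div (by positivity) two_ne_zero
      linarith
    have habs : ‖Real.log (Real.sin θ)‖ = -Real.log (Real.sin θ) := by
      rw [Real.norm_eq_abs, abs_of_nonpos (Real.log_nonpos hs0.le hs1)]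
    rw [habs]
    have := neg_log_le_rpow h0
    linarith

lemma intervalIntegrable_log_cos_half :
    IntervalIntegrable (fun θ => Real.log (Real.cos θ)) volume 0 (π/2) := by
  have h2 := intervalIntegrable_log_sin_half.comp_sub_left (π/2)
  simp only [sub_zero, sub_half, Real.sin_pi_div_two_sub] at h2
  simpa using h2.symm

lemma intervalIntegrable_log_sin_full :
    IntervalIntegrable (fun θ => Real.log (Real.sin θ)) volume 0 π := by
  have h2 := intervalIntegrable_log_sin_half.comp_sub_left π
  simp only [sub_zero, sub_half, Real.sin_pi_sub] at h2
  exact intervalIntegrable_log_sin_half.trans h2.symm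

lemma integral_log_sin_full : (∫ θ in (0)..π, Real.log (Real.sin θ)) = -π * Real.log 2 := by
  have hπ : (0:ℝ) < π := pi_pos
  set I2 : ℝ := ∫ θ in (0)..(π/2), Real.log (Real.sin θ) with hI2
  -- second half equals first half
  have h2 := intervalIntegrable_log_sin_half.comp_sub_left π
  simp only [sub_zero, sub_half, Real.sin_pi_sub] at h2
  have ehalf : (∫ θ in (π/2)..π, Real.log (Real.sin θ)) = I2 := by
    have := intervalIntegral.integral_comp_sub_left (fun t => Real.log (Real.sin t)) π
      (a := π/2) (b := π)
    simp only [Real.sin_pi_sub, sub_self, sub_half] at this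
    exact this
  have hfull : (∫ θ in (0)..π, Real.log (Real.sin θ)) = 2 * I2 := by
    rw [← intervalIntegral.integral_add_adjacent_intervals
      intervalIntegrable_log_sin_half h2.symm] at *
    rw [ehalf]; ring
  -- doubling substitution
  have hdouble : (∫ θ in (0)..(π/2), Real.log (Real.sin (2*θ)))
      = 2⁻¹ * ∫ θ in (0)..π, Real.log (Real.sin θ) := by
    have := intervalIntegral.integral_comp_mul_left (fun t => Real.log (Real.sin t))
      (a := 0) (b := π/2) (c := (2:ℝ)) two_ne_zero
    simp only [mul_zero] at this
    rw [this, show (2:ℝ) * (π/2) = π from by ring, smul_eq_mul]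
  -- split log sin 2θ
  have hsplit : (∫ θ in (0)..(π/2), Real.log (Real.sin (2*θ)))
      = (∫ θ in (0)..(π/2), (Real.log 2 + Real.log (Real.sin θ) + Real.log (Real.cos θ))) := by
    apply intervalIntegral.integral_congr_ae
    have hmeas : MeasurableSet ({0, π/2}ᶜ : Set ℝ) := by
      measurability
    have hnull : (volume ({0, π/2} : Set ℝ)) = 0 :=
      Set.Countable.measure_zero (Set.to_countable _) _
    rw [Filter.eventually_iff_exists_mem]
    refine ⟨({0, π/2}ᶜ : Set ℝ), ?_, ?_⟩
    · rw [MeasureTheory.mem_ae_iff, compl_compl]; exact hnull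
    · intro θ hθc hθ
      rw [Set.uIoc_of_le (by positivity)] at hθ
      simp only [Set.mem_compl_iff, Set.mem_insert_iff, Set.mem_singleton_iff, not_or] at hθc
      have h0 : 0 < θ := lt_of_le_of_ne hθ.1.le (Ne.symm hθc.1)
      have h1 : θ < π/2 := lt_of_le_of_ne hθ.2 hθc.2
      have hs : 0 < Real.sin θ := Real.sin_pos_of_pos_of_lt_pi h0 (by linarith)
      have hc : 0 < Real.cos θ := Real.cos_pos_of_mem_Ioo ⟨by linarith, h1⟩
      rw [Real.sin_two_mul, Real.log_mul (by positivity) hc.ne',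
        Real.log_mul two_ne_zero hs.ne']
  have hcos : (∫ θ in (0)..(π/2), Real.log (Real.cos θ)) = I2 := by
    have := intervalIntegral.integral_comp_sub_left (fun t => Real.log (Real.sin t)) (π/2)
      (a := 0) (b := π/2)
    simp only [Real.sin_pi_div_two_sub, sub_self, sub_zero, sub_half] at this
    exact this
  have hsum : (∫ θ in (0)..(π/2), (Real.log 2 + Real.log (Real.sin θ) + Real.log (Real.cos θ)))
      = Real.log 2 * (π/2) + I2 + I2 := by
    rw [intervalIntegral.integral_add
        (intervalIntegrable_const.add intervalIntegrable_log_sin_half)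
        intervalIntegrable_log_cos_half,
      intervalIntegral.integral_add intervalIntegrable_const
        intervalIntegrable_log_sin_half]
    simp [hcos, hI2, mul_comm]
  have : 2 * I2 = 2 * (Real.log 2 * (π/2) + I2 + I2) := by
    rw [← hfull]
    rw [hfull] at hdouble
    rw [hsplit, hsum] at hdouble
    linarith
  have hI2v : I2 = -(π/2) * Real.log 2 := by linarith
  rw [hfull, hI2v]; ring

/-- For every real `x ≥ 4`,
`ln x = Σ_{n≥1} (1/n) Σ_{j=0}^{n} C(n,j) C(2j,j) (-1/x)^j`. -/
theorem log_eq_double_series (x : ℝ) (hx : 4 ≤ x) :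
    HasSum (fun n : ℕ =>
      (1 / (n + 1 : ℝ)) *
        ∑ j ∈ Finset.range (n + 2),
          ((n + 1).choose j : ℝ) * ((2 * j).choose j : ℝ) * (-1 / x) ^ j)
      (Real.log x) := by
  have hx0 : (0:ℝ) < x := by linarith
  set u : ℝ := 4 / x with hu
  have hu0 : 0 < u := by positivity
  have hu1 : u ≤ 1 := by rw [hu, div_le_one hx0]; linarith
  have hux : -u / 4 = -1 / x := by rw [hu]; field_simp
  set a : ℕ → ℝ := fun n =>
    (1 / (n + 1 : ℝ)) * ∑ j ∈ Finset.range (n + 2),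
      ((n + 1).choose j : ℝ) * ((2 * j).choose j : ℝ) * (-1 / x) ^ j with ha
  set F : ℕ → ℝ → ℝ := fun n θ => (1 - u * Real.sin θ ^ 2) ^ (n + 1) / (n + 1) with hF
  -- pointwise bounds on the base
  have hbase : ∀ θ : ℝ, 0 ≤ 1 - u * Real.sin θ ^ 2 ∧ 1 - u * Real.sin θ ^ 2 ≤ 1 := by
    intro θ
    have h1 : Real.sin θ ^ 2 ≤ 1 := Real.sin_sq_le_one θ
    have h2 : 0 ≤ Real.sin θ ^ 2 := sq_nonneg _
    constructor <;> nlinarith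
  have hFnn : ∀ n θ, 0 ≤ F n θ := by
    intro n θ
    have := (hbase θ).1
    have : (0:ℝ) ≤ (1 - u * Real.sin θ ^ 2) ^ (n + 1) := pow_nonneg this _
    positivity
  have hFcont : ∀ n, Continuous (F n) := by
    intro n
    exact ((continuous_const.sub (continuous_const.mul
      ((Real.continuous_sin.pow 2)))).pow (n + 1)).div_const _
  -- each term equals an integral
  have hterm : ∀ n : ℕ, (∫ θ in (0)..π, F n θ) = π * a n := by
    intro n
    have hne : ((n:ℝ) + 1) ≠ 0 := by positivity
    rw [hF]
    simp only [div_eq_mul_inv]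
    rw [intervalIntegral.integral_mul_const, inner_sum_integral u (n + 1)]
    rw [ha]
    simp only [hux]
    push_cast
    ring
  have hann : ∀ n, 0 ≤ a n := by
    intro n
    have h1 : 0 ≤ ∫ θ in (0)..π, F n θ :=
      intervalIntegral.integral_nonneg pi_pos.le fun θ _ => hFnn n θ
    rw [hterm n] at h1
    nlinarith [pi_pos]
  -- the limit function
  set g : ℝ → ℝ := fun θ => Real.log x - Real.log 4 - 2 * Real.log (Real.sin θ) with hg
  have hgInt : IntervalIntegrable g volume 0 π := by
    exact (intervalIntegrable_const.sub
      (intervalIntegrable_log_sin_full.const_mul 2))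
  have hgval : (∫ θ in (0)..π, g θ) = π * Real.log x := by
    rw [hg]
    rw [intervalIntegral.integral_sub intervalIntegrable_const
        (intervalIntegrable_log_sin_full.const_mul 2),
      intervalIntegral.integral_const_mul, integral_log_sin_full,
      intervalIntegral.integral_const]
    have h4 : Real.log 4 = 2 * Real.log 2 := by
      rw [show (4:ℝ) = 2^2 by norm_num, Real.log_pow]
      push_cast; ring
    simp only [smul_eq_mul, sub_zero]
    rw [h4]; ring
  -- pointwise HasSum on (0, π)
  have hptwise : ∀ θ ∈ Set.Ioo (0:ℝ) π, HasSum (fun n => F n θ) (g θ) := by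
    intro θ hθ
    have hs : 0 < Real.sin θ := Real.sin_pos_of_pos_of_lt_pi hθ.1 hθ.2
    set y : ℝ := 1 - u * Real.sin θ ^ 2 with hy
    have hy0 : 0 ≤ y := (hbase θ).1
    have hy1 : y < 1 := by
      have : 0 < u * Real.sin θ ^ 2 := by positivity
      rw [hy]; linarith
    have habs : |y| < 1 := by rw [abs_of_nonneg hy0]; exact hy1
    have hsum := Real.hasSum_pow_div_log_of_abs_lt_one habs
    have h1y : 1 - y = u * Real.sin θ ^ 2 := by rw [hy]; ring
    have hval : -Real.log (1 - y) = g θ := by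
      rw [h1y, Real.log_mul hu0.ne' (by positivity), Real.log_pow, hg, hu,
        Real.log_div (by norm_num) hx0.ne']
      push_cast; ring
    rw [hval] at hsum
    exact hsum
  -- interchange via lintegral
  set μ : MeasureTheory.Measure ℝ := volume.restrict (Set.Ioc 0 π) with hμ
  have hFae : ∀ n, AEMeasurable (fun θ => ENNReal.ofReal (F n θ)) μ :=
    fun n => ((hFcont n).measurable.ennreal_ofReal).aemeasurable
  have hswap : (∫⁻ θ, ∑' n, ENNReal.ofReal (F n θ) ∂μ)
      = ∑' n, ∫⁻ θ, ENNReal.ofReal (F n θ) ∂μ :=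
    MeasureTheory.lintegral_tsum hFae
  have hae_lim : ∀ᵐ θ ∂μ, (∑' n, ENNReal.ofReal (F n θ)) = ENNReal.ofReal (g θ) := by
    have h1 : ∀ᵐ θ ∂μ, θ ∈ Set.Ioc (0:ℝ) π := MeasureTheory.ae_restrict_mem measurableSet_Ioc
    have h2 : ∀ᵐ θ ∂μ, θ ≠ π := by
      rw [MeasureTheory.ae_iff]
      have : {θ : ℝ | ¬ θ ≠ π} = {π} := by ext θ; simp
      rw [this, hμ]
      exact le_antisymm (le_trans (MeasureTheory.Measure.restrict_apply_le _ _)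
        (le_of_eq (Real.volume_singleton))) zero_le
    filter_upwards [h1, h2] with θ hθ hθπ
    have hθ' : θ ∈ Set.Ioo (0:ℝ) π := ⟨hθ.1, lt_of_le_of_ne hθ.2 hθπ⟩
    have hsum := hptwise θ hθ'
    rw [← ENNReal.ofReal_tsum_of_nonneg (fun n => hFnn n θ) hsum.summable, hsum.tsum_eq]
  -- compute both sides
  have hIoc : ∀ f : ℝ → ℝ, IntervalIntegrable f volume 0 π → 0 ≤ f →
      (∫⁻ θ, ENNReal.ofReal (f θ) ∂μ) = ENNReal.ofReal (∫ θ in (0)..π, f θ) := by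
    intro f hf hnn
    rw [intervalIntegral.integral_of_le pi_pos.le]
    rw [← MeasureTheory.ofReal_integral_eq_lintegral_ofReal
      ((intervalIntegrable_iff_integrableOn_Ioc_of_le pi_pos.le).mp hf)
      (Filter.Eventually.of_forall fun θ => hnn θ)]
  have hlhs : (∫⁻ θ, ENNReal.ofReal (g θ) ∂μ) = ENNReal.ofReal (π * Real.log x) := by
    have hgnn : 0 ≤ᵐ[μ] g := by
      have h1 : ∀ᵐ θ ∂μ, θ ∈ Set.Ioc (0:ℝ) π := MeasureTheory.ae_restrict_mem measurableSet_Ioc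
      filter_upwards [h1] with θ hθ
      have hs1 : Real.sin θ ≤ 1 := Real.sin_le_one θ
      have hs0 : 0 ≤ Real.sin θ := Real.sin_nonneg_of_nonneg_of_le_pi hθ.1.le hθ.2
      have hlog : Real.log (Real.sin θ) ≤ 0 := Real.log_nonpos hs0 hs1
      have hlx : Real.log 4 ≤ Real.log x := Real.log_le_log (by norm_num) hx
      rw [hg]; simp only [Pi.zero_apply]; linarith
    rw [intervalIntegral.integral_of_le pi_pos.le] at hgval
    rw [← MeasureTheory.ofReal_integral_eq_lintegral_ofReal
      ((intervalIntegrable_iff_integrableOn_Ioc_of_le pi_pos.le).mp hgInt) hgnn, hgval]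
  have hkey : (∑' n, ENNReal.ofReal (π * a n)) = ENNReal.ofReal (π * Real.log x) := by
    calc (∑' n, ENNReal.ofReal (π * a n))
        = ∑' n, ∫⁻ θ, ENNReal.ofReal (F n θ) ∂μ := by
          refine tsum_congr fun n => ?_
          rw [hIoc (F n) ((hFcont n).intervalIntegrable _ _) (fun θ => hFnn n θ), hterm n]
      _ = ∫⁻ θ, ∑' n, ENNReal.ofReal (F n θ) ∂μ := hswap.symm
      _ = ∫⁻ θ, ENNReal.ofReal (g θ) ∂μ := MeasureTheory.lintegral_congr_ae hae_lim
      _ = ENNReal.ofReal (π * Real.log x) := hlhs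
  -- extract the real HasSum
  have hTnn : ∀ n, 0 ≤ π * a n := fun n => mul_nonneg pi_pos.le (hann n)
  have hsummable : Summable (fun n => π * a n) := by
    have hne : (∑' n, ENNReal.ofReal (π * a n)) ≠ ⊤ := by
      rw [hkey]; exact ENNReal.ofReal_ne_top
    have := ENNReal.summable_toReal hne
    refine this.congr fun n => ?_
    rw [ENNReal.toReal_ofReal (hTnn n)]
  have htsum : (∑' n, π * a n) = π * Real.log x := by
    have h1 : ENNReal.ofReal (∑' n, π * a n) = ENNReal.ofReal (π * Real.log x) := by
      rw [ENNReal.ofReal_tsum_of_nonneg hTnn hsummable, hkey]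
    have h2 : 0 ≤ (∑' n, π * a n) := tsum_nonneg hTnn
    have h3 : 0 ≤ π * Real.log x :=
      mul_nonneg pi_pos.le (Real.log_nonneg (by linarith))
    rwa [ENNReal.ofReal_eq_ofReal_iff h2 h3] at h1
  have hHasSum : HasSum (fun n => π * a n) (π * Real.log x) := by
    rw [← htsum]; exact hsummable.hasSum
  have hfinal := hHasSum.mul_left π⁻¹
  have hπ : (π:ℝ) ≠ 0 := pi_ne_zero
  simp only [← mul_assoc, inv_mul_cancel₀ hπ, one_mul] at hfinal
  exact hfinal
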